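/- Let x : (t₁, t₂) → ℝ^d be a path with finite action whose collision set coll(x) = {t : x(t) = 0} has measure zero, such that x solves ẍ = ∇U(x) with the same constant energy h on every subinterval free of collisions. If t₀ ∈ coll(x) is not isolated in coll(x), then there exist intervals (aᵢ, bᵢ) with aᵢ, bᵢ → t₀, x(aᵢ) = x(bᵢ) = 0, x ≠ 0 on (aᵢ, bᵢ), and instants tᵢ ∈ (aᵢ, bᵢ) with İ(tᵢ) = 0 where I = |x|²; this contradicts Ï(t) = 4h + 2(2-α)U(x(t)) → +∞ as t → t₀ (since then İ would be strictly monotone near t₀). Hence collisions of a finite-action minimizer are isolated. -/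

import Mathlib

open Real Set

section Aux

variable {d : ℕ} {α : ℝ} {U : EuclideanSpace ℝ (Fin d) → ℝ}

lemma aux_scale
    (hUhom : ∀ y : EuclideanSpace ℝ (Fin d), y ≠ 0 → U y = ‖y‖ ^ (-α) * U (‖y‖⁻¹ • y))
    {y : EuclideanSpace ℝ (Fin d)} (hy : y ≠ 0) {l : ℝ} (hl : 0 < l) :
    U (l • y) = l ^ (-α) * U y := by
  have hny : 0 < ‖y‖ := norm_pos_iff.mpr hy
  have hly : l • y ≠ 0 := smul_ne_zero hl.ne' hy
  have hn : ‖l • y‖ = l * ‖y‖ := by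
    rw [norm_smul, Real.norm_eq_abs, abs_of_pos hl]
  have hs : ‖l • y‖⁻¹ • (l • y) = ‖y‖⁻¹ • y := by
    rw [hn, smul_smul]; congr 1; field_simp
  rw [hUhom (l • y) hly, hs, hn, Real.mul_rpow hl.le hny.le, mul_assoc, ← hUhom y hy]

lemma aux_euler
    (hUhom : ∀ y : EuclideanSpace ℝ (Fin d), y ≠ 0 → U y = ‖y‖ ^ (-α) * U (‖y‖⁻¹ • y))
    (hUC2 : ContDiffOn ℝ 2 U {y : EuclideanSpace ℝ (Fin d) | y ≠ 0})
    {y : EuclideanSpace ℝ (Fin d)} (hy : y ≠ 0) :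
    inner ℝ (gradient U y) y = -α * U y := by
  have hopen : IsOpen {y : EuclideanSpace ℝ (Fin d) | y ≠ 0} := isOpen_compl_singleton
  have hdU : DifferentiableAt ℝ U y :=
    ((hUC2.differentiableOn (by norm_num)).differentiableAt (hopen.mem_nhds hy))
  have hs : HasDerivAt (fun l : ℝ => l • y) y 1 := by
    simpa using (hasDerivAt_id (1:ℝ)).smul_const y
  have hcomp : HasDerivAt (fun l : ℝ => U (l • y)) (fderiv ℝ U y y) 1 := by
    have h1 : HasFDerivAt U (fderiv ℝ U y) ((1:ℝ) • y) := by
      rw [one_smul]; exact hdU.hasFDerivAt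
    have := h1.comp_hasDerivAt (1:ℝ) hs
    exact this
  have heq : (fun l : ℝ => U (l • y)) =ᶠ[nhds 1] fun l => l ^ (-α) * U y := by
    filter_upwards [eventually_gt_nhds (by norm_num : (0:ℝ) < 1)] with l hl
    exact aux_scale hUhom hy hl
  have hrpow : HasDerivAt (fun l : ℝ => l ^ (-α) * U y) ((-α) * (1:ℝ) ^ (-α - 1) * U y) 1 :=
    (Real.hasDerivAt_rpow_const (Or.inl one_ne_zero)).mul_const (U y)
  have huniq : fderiv ℝ U y y = -α * U y := by
    have := (hcomp.congr_of_eventuallyEq heq.symm).unique hrpow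
    simpa using this
  rw [gradient, InnerProductSpace.toDual_symm_apply]
  exact huniq

lemma aux_min (hd : 2 ≤ d)
    (hUhom : ∀ y : EuclideanSpace ℝ (Fin d), y ≠ 0 → U y = ‖y‖ ^ (-α) * U (‖y‖⁻¹ • y))
    (hUC2 : ContDiffOn ℝ 2 U {y : EuclideanSpace ℝ (Fin d) | y ≠ 0})
    (hUpos : ∀ y : EuclideanSpace ℝ (Fin d), ‖y‖ = 1 → 0 < U y) :
    ∃ m : ℝ, 0 < m ∧ ∀ y : EuclideanSpace ℝ (Fin d), y ≠ 0 → m * ‖y‖ ^ (-α) ≤ U y := by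
  have hy₀ : ∃ y₀ : EuclideanSpace ℝ (Fin d), ‖y₀‖ = 1 := by
    refine ⟨EuclideanSpace.single (⟨0, by omega⟩ : Fin d) (1:ℝ), ?_⟩
    simp [EuclideanSpace.norm_single]
  obtain ⟨y₀, hy₀⟩ := hy₀
  have hsne : (Metric.sphere (0 : EuclideanSpace ℝ (Fin d)) 1).Nonempty := by
    exact ⟨y₀, by simpa using hy₀⟩
  have hcontU : ContinuousOn U (Metric.sphere (0 : EuclideanSpace ℝ (Fin d)) 1) := by
    refine hUC2.continuousOn.mono ?_
    intro y hy
    have h1 : ‖y‖ = 1 := by simpa using hy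
    simp only [mem_setOf_eq]
    intro h0
    rw [h0] at h1
    simp at h1
  obtain ⟨z, hz, hzmin⟩ :=
    (isCompact_sphere (0 : EuclideanSpace ℝ (Fin d)) 1).exists_isMinOn hsne hcontU
  have hznorm : ‖z‖ = 1 := by simpa using hz
  refine ⟨U z, hUpos z hznorm, ?_⟩
  intro y hy
  have hny : 0 < ‖y‖ := norm_pos_iff.mpr hy
  have hunit : ‖(‖y‖⁻¹ • y : EuclideanSpace ℝ (Fin d))‖ = 1 := by
    rw [norm_smul, norm_inv, norm_norm, inv_mul_cancel₀ hny.ne']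
  have hmem : (‖y‖⁻¹ • y : EuclideanSpace ℝ (Fin d)) ∈
      Metric.sphere (0 : EuclideanSpace ℝ (Fin d)) 1 := by simpa using hunit
  have := hzmin hmem
  rw [hUhom y hy]
  have hrp : (0:ℝ) < ‖y‖ ^ (-α) := Real.rpow_pos_of_pos hny _
  calc U z * ‖y‖ ^ (-α) ≤ U (‖y‖⁻¹ • y) * ‖y‖ ^ (-α) := by
        exact mul_le_mul_of_nonneg_right this hrp.le
    _ = ‖y‖ ^ (-α) * U (‖y‖⁻¹ • y) := mul_comm _ _

end Aux

theorem collisions_isolated {d : ℕ} (hd : 2 ≤ d) (α h t₁ t₂ : ℝ)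
    (hα : α ∈ Set.Ioo (0:ℝ) 2) (ht : t₁ < t₂)
    (U : EuclideanSpace ℝ (Fin d) → ℝ)
    (hUhom : ∀ y : EuclideanSpace ℝ (Fin d), y ≠ 0 →
      U y = ‖y‖ ^ (-α) * U (‖y‖⁻¹ • y))
    (hUC2 : ContDiffOn ℝ 2 U {y : EuclideanSpace ℝ (Fin d) | y ≠ 0})
    (hUpos : ∀ y : EuclideanSpace ℝ (Fin d), ‖y‖ = 1 → 0 < U y)
    (x : ℝ → EuclideanSpace ℝ (Fin d))
    (hcont : ContinuousOn x (Set.Icc t₁ t₂))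
    -- finite action:
    (hfin : IntervalIntegrable
      (fun t => (1/2) * ‖deriv x t‖^2 + U (x t)) MeasureTheory.volume t₁ t₂)
    -- the collision set has measure zero:
    (hmeas : MeasureTheory.volume {t | t ∈ Set.Ioo t₁ t₂ ∧ x t = 0} = 0)
    (hdiff : ∀ t ∈ Set.Ioo t₁ t₂, x t ≠ 0 →
      DifferentiableAt ℝ x t ∧ DifferentiableAt ℝ (deriv x) t)
    -- the equation holds with the same constant energy `h` away from collisions:
    (hsol : ∀ t ∈ Set.Ioo t₁ t₂, x t ≠ 0 →
      deriv (deriv x) t = gradient U (x t) ∧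
      (1/2) * ‖deriv x t‖^2 - U (x t) = h) :
    ∀ t₀ ∈ Set.Ioo t₁ t₂, x t₀ = 0 →
      ∃ δ > (0:ℝ), ∀ t ∈ Set.Ioo (t₀ - δ) (t₀ + δ), t ≠ t₀ → x t ≠ 0 := by
  intro t₀ ht₀ hx₀
  by_contra hcon
  push_neg at hcon
  -- lower bound on U
  obtain ⟨m, hm, hmU⟩ := aux_min hd hUhom hUC2 hUpos
  -- choose ε such that ‖y‖ ≤ ε, y ≠ 0 implies 4h + (4-2α)U y > 0
  have h4α : (0:ℝ) < 4 - 2*α := by linarith [hα.2]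
  set K : ℝ := (4 - 2*α) * m / (4*|h| + 1) with hK
  have hKpos : 0 < K := by positivity
  set ε : ℝ := (min K 1) ^ (1/α) with hε
  have hminpos : 0 < min K 1 := lt_min hKpos one_pos
  have hεpos : 0 < ε := Real.rpow_pos_of_pos hminpos _
  have hεα : ε ^ α = min K 1 := by
    rw [hε, ← Real.rpow_mul hminpos.le, one_div, inv_mul_cancel₀ (ne_of_gt hα.1),
      Real.rpow_one]
  -- key positivity of the "Lagrange–Jacobi" quantity for small ‖y‖
  have hUbig : ∀ y : EuclideanSpace ℝ (Fin d), y ≠ 0 → ‖y‖ ≤ ε →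
      0 < 4*h + (4 - 2*α) * U y := by
    intro y hy hyε
    have hny : 0 < ‖y‖ := norm_pos_iff.mpr hy
    have h1 : ‖y‖ ^ α ≤ ε ^ α := Real.rpow_le_rpow hny.le hyε hα.1.le
    have h2 : (0:ℝ) < ‖y‖ ^ α := Real.rpow_pos_of_pos hny _
    have h3 : m / (ε ^ α) ≤ m / (‖y‖ ^ α) :=
      div_le_div_of_nonneg_left hm.le h2 h1
    have h4 : m / (‖y‖ ^ α) = m * ‖y‖ ^ (-α) := by
      rw [Real.rpow_neg hny.le, div_eq_mul_inv]
    have h5 : m / K ≤ m / (ε ^ α) := by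
      rw [hεα]
      exact div_le_div_of_nonneg_left hm.le hminpos (min_le_left _ _)
    have h6 : m / K = (4*|h| + 1) / (4 - 2*α) := by
      rw [hK]
      field_simp
    have h7 : m * ‖y‖ ^ (-α) ≤ U y := hmU y hy
    have h8 : (4*|h| + 1) / (4 - 2*α) ≤ U y := by
      calc (4*|h| + 1) / (4 - 2*α) = m / K := h6.symm
        _ ≤ m / (ε ^ α) := h5
        _ ≤ m / (‖y‖ ^ α) := h3
        _ = m * ‖y‖ ^ (-α) := h4
        _ ≤ U y := h7
    have h9 : 4*|h| + 1 ≤ (4 - 2*α) * U y := by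
      rw [div_le_iff₀ h4α] at h8
      linarith
    have := abs_nonneg h
    have := neg_abs_le h
    linarith
  -- choose δ₀ > 0 so that on (t₀-δ₀, t₀+δ₀) we stay in Ioo t₁ t₂ and ‖x t‖ < ε
  have hIccnhds : Set.Icc t₁ t₂ ∈ nhds t₀ :=
    Filter.mem_of_superset (isOpen_Ioo.mem_nhds ht₀) Ioo_subset_Icc_self
  have hxc : ContinuousAt x t₀ := by
    have := (hcont t₀ (Ioo_subset_Icc_self ht₀))
    rwa [ContinuousWithinAt, nhdsWithin_eq_nhds.mpr hIccnhds] at this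
  have hev : ∀ᶠ t in nhds t₀, ‖x t‖ < ε ∧ t ∈ Set.Ioo t₁ t₂ := by
    have h1 : ∀ᶠ t in nhds t₀, ‖x t‖ < ε := by
      have : ContinuousAt (fun t => ‖x t‖) t₀ := hxc.norm
      have h0 : ‖x t₀‖ < ε := by rw [hx₀]; simpa using hεpos
      exact this.eventually_lt_const h0
    exact h1.and (isOpen_Ioo.eventually_mem ht₀)
  obtain ⟨δ₀, hδ₀pos, hδ₀⟩ := Metric.eventually_nhds_iff.mp hev
  -- get a second collision s ≠ t₀ within δ₀
  obtain ⟨s, hsmem, hsne, hxs⟩ := hcon δ₀ hδ₀pos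
  have hdist : ∀ t ∈ Set.Icc (min t₀ s) (max t₀ s), dist t t₀ < δ₀ := by
    intro t htmem
    rw [Real.dist_eq, abs_lt]
    rcases le_total t₀ s with hc | hc
    · rw [min_eq_left hc, max_eq_right hc] at htmem
      obtain ⟨hl, hr⟩ := hsmem
      constructor <;> nlinarith [htmem.1, htmem.2]
    · rw [min_eq_right hc, max_eq_left hc] at htmem
      obtain ⟨hl, hr⟩ := hsmem
      constructor <;> nlinarith [htmem.1, htmem.2]
  set a : ℝ := min t₀ s with ha
  set b : ℝ := max t₀ s with hb
  have hab : a < b := by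
    rcases lt_or_gt_of_ne hsne with hc | hc
    · rw [ha, hb, min_eq_right hc.le, max_eq_left hc.le]; exact hc
    · rw [ha, hb, min_eq_left hc.le, max_eq_right hc.le]; exact hc
  have hxa : x a = 0 := by
    rcases le_total t₀ s with hc | hc
    · rw [ha, min_eq_left hc]; exact hx₀
    · rw [ha, min_eq_right hc]; exact hxs
  have hxb : x b = 0 := by
    rcases le_total t₀ s with hc | hc
    · rw [hb, max_eq_right hc]; exact hxs
    · rw [hb, max_eq_left hc]; exact hx₀
  -- every point of [a,b] is in Ioo t₁ t₂ with ‖x t‖ < ε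
  have hgood : ∀ t ∈ Set.Icc a b, ‖x t‖ < ε ∧ t ∈ Set.Ioo t₁ t₂ := fun t htm =>
    hδ₀ (hdist t htm)
  have habsub : Set.Icc a b ⊆ Set.Icc t₁ t₂ := fun t htm =>
    Ioo_subset_Icc_self (hgood t htm).2
  -- find a non-collision instant in (a, b)
  have hexc : ∃ c ∈ Set.Ioo a b, x c ≠ 0 := by
    by_contra hno
    push_neg at hno
    have hsub : Set.Ioo a b ⊆ {t | t ∈ Set.Ioo t₁ t₂ ∧ x t = 0} := by
      intro t htm
      exact ⟨(hgood t (Ioo_subset_Icc_self htm)).2, hno t htm⟩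
    have := MeasureTheory.measure_mono (μ := MeasureTheory.volume) hsub
    rw [hmeas, Real.volume_Ioo] at this
    simp only [le_zero_iff, ENNReal.ofReal_eq_zero] at this
    linarith
  obtain ⟨c, hcmem, hxcne⟩ := hexc
  -- last collision before c
  have hZ1closed : IsClosed {t | t ∈ Set.Icc a c ∧ x t = 0} := by
    have hc1 : ContinuousOn x (Set.Icc a c) :=
      hcont.mono (fun t htm => habsub ⟨htm.1, htm.2.trans hcmem.2.le⟩)
    have := hc1.preimage_isClosed_of_isClosed isClosed_Icc
      (isClosed_singleton (x := (0 : EuclideanSpace ℝ (Fin d))))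
    exact this
  set a' : ℝ := sSup {t | t ∈ Set.Icc a c ∧ x t = 0} with ha'
  have hZ1ne : {t | t ∈ Set.Icc a c ∧ x t = 0}.Nonempty :=
    ⟨a, ⟨le_refl a, hcmem.1.le⟩, hxa⟩
  have hZ1bdd : BddAbove {t | t ∈ Set.Icc a c ∧ x t = 0} :=
    BddAbove.mono (fun t htm => htm.1) bddAbove_Icc
  have ha'mem : a' ∈ {t | t ∈ Set.Icc a c ∧ x t = 0} :=
    hZ1closed.csSup_mem hZ1ne hZ1bdd
  have hxa' : x a' = 0 := ha'mem.2
  have ha'c : a' < c := lt_of_le_of_ne ha'mem.1.2 (fun hh => hxcne (hh ▸ hxa'))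
  have ha'a : a ≤ a' := ha'mem.1.1
  have hnz1 : ∀ t ∈ Set.Ioo a' c, x t ≠ 0 := by
    intro t htm h0
    have : t ≤ a' := le_csSup hZ1bdd ⟨⟨ha'a.trans htm.1.le, htm.2.le⟩, h0⟩
    exact absurd htm.1 (not_lt.mpr this)
  -- first collision after c
  have hZ2closed : IsClosed {t | t ∈ Set.Icc c b ∧ x t = 0} := by
    have hc2 : ContinuousOn x (Set.Icc c b) :=
      hcont.mono (fun t htm => habsub ⟨hcmem.1.le.trans htm.1, htm.2⟩)
    have := hc2.preimage_isClosed_of_isClosed isClosed_Icc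
      (isClosed_singleton (x := (0 : EuclideanSpace ℝ (Fin d))))
    exact this
  set b' : ℝ := sInf {t | t ∈ Set.Icc c b ∧ x t = 0} with hb'
  have hZ2ne : {t | t ∈ Set.Icc c b ∧ x t = 0}.Nonempty :=
    ⟨b, ⟨hcmem.2.le, le_refl b⟩, hxb⟩
  have hZ2bdd : BddBelow {t | t ∈ Set.Icc c b ∧ x t = 0} :=
    BddBelow.mono (fun t htm => htm.1) bddBelow_Icc
  have hb'mem : b' ∈ {t | t ∈ Set.Icc c b ∧ x t = 0} :=
    hZ2closed.csInf_mem hZ2ne hZ2bdd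
  have hxb' : x b' = 0 := hb'mem.2
  have hcb' : c < b' := lt_of_le_of_ne hb'mem.1.1 (fun hh => hxcne (hh ▸ hxb'))
  have hb'b : b' ≤ b := hb'mem.1.2
  have hnz2 : ∀ t ∈ Set.Ioo c b', x t ≠ 0 := by
    intro t htm h0
    have : b' ≤ t := csInf_le hZ2bdd ⟨⟨htm.1.le, htm.2.le.trans hb'b⟩, h0⟩
    exact absurd htm.2 (not_lt.mpr this)
  -- x ≠ 0 on (a', b')
  have hnz : ∀ t ∈ Set.Ioo a' b', x t ≠ 0 := by
    intro t htm
    rcases lt_trichotomy t c with hc | hc | hc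
    · exact hnz1 t ⟨htm.1, hc⟩
    · exact hc ▸ hxcne
    · exact hnz2 t ⟨hc, htm.2⟩
  have hsubIoo : Set.Ioo a' b' ⊆ Set.Ioo t₁ t₂ := by
    intro t htm
    exact (hgood t ⟨ha'a.trans htm.1.le, htm.2.le.trans hb'b⟩).2
  have hsubIcc : Set.Icc a' b' ⊆ Set.Icc a b :=
    fun t htm => ⟨ha'a.trans htm.1, htm.2.trans hb'b⟩
  have ha'b' : a' < b' := ha'c.trans hcb'
  -- I = |x|², J = İ
  set I : ℝ → ℝ := fun t => (inner ℝ (x t) (x t) : ℝ) with hIdef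
  set J : ℝ → ℝ := fun t => 2 * (inner ℝ (deriv x t) (x t) : ℝ) with hJdef
  have hIcont : ContinuousOn I (Set.Icc a' b') := by
    have hxc' : ContinuousOn x (Set.Icc a' b') :=
      hcont.mono (fun t htm => habsub (hsubIcc htm))
    exact hxc'.inner hxc'
  have hI' : ∀ t ∈ Set.Ioo a' b', HasDerivAt I (J t) t := by
    intro t htm
    have hx' := (hdiff t (hsubIoo htm) (hnz t htm)).1.hasDerivAt
    have := HasDerivAt.inner ℝ hx' hx'
    refine this.congr_deriv ?_
    rw [hJdef]
    simp only []
    rw [real_inner_comm (deriv x t) (x t)]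
    ring
  have hJ' : ∀ t ∈ Set.Ioo a' b',
      HasDerivAt J (4*h + (4 - 2*α) * U (x t)) t := by
    intro t htm
    have hmem := hsubIoo htm
    have hne := hnz t htm
    have hx1 := (hdiff t hmem hne).1.hasDerivAt
    have hx2 := (hdiff t hmem hne).2.hasDerivAt
    have hder := (HasDerivAt.inner ℝ hx2 hx1).const_mul (2:ℝ)
    refine hder.congr_deriv ?_
    obtain ⟨heq, hen⟩ := hsol t hmem hne
    have heuler : (inner ℝ (gradient U (x t)) (x t) : ℝ) = -α * U (x t) :=
      aux_euler hUhom hUC2 hne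
    have hnorm : (inner ℝ (deriv x t) (deriv x t) : ℝ) = ‖deriv x t‖^2 :=
      real_inner_self_eq_norm_sq _
    have h2 : ‖deriv x t‖^2 = 2*h + 2*U (x t) := by linarith
    rw [heq, heuler, hnorm, h2]
    ring
  -- J is strictly monotone on (a', b')
  have hJpos : ∀ t ∈ Set.Ioo a' b', 0 < 4*h + (4 - 2*α) * U (x t) := by
    intro t htm
    exact hUbig (x t) (hnz t htm)
      (hgood t (hsubIcc (Ioo_subset_Icc_self htm))).1.le
  have hJmono : StrictMonoOn J (Set.Ioo a' b') := by
    refine strictMonoOn_of_deriv_pos (convex_Ioo a' b') ?_ ?_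
    · exact fun t htm => (hJ' t htm).differentiableAt.continuousAt.continuousWithinAt
    · intro t htm
      rw [interior_Ioo] at htm
      rw [(hJ' t htm).deriv]
      exact hJpos t htm
  -- maximum point of I on [a', b']
  obtain ⟨c₀, hc₀mem, hc₀max⟩ :=
    isCompact_Icc.exists_isMaxOn (nonempty_Icc.mpr ha'b'.le) hIcont
  have hIpos : ∀ u : ℝ, x u ≠ 0 → 0 < I u := by
    intro u hu
    have : I u = ‖x u‖^2 := real_inner_self_eq_norm_sq _
    rw [this]
    exact pow_pos (norm_pos_iff.mpr hu) 2
  have hIc : 0 < I c := hIpos c hxcne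
  have hIc₀ : 0 < I c₀ :=
    lt_of_lt_of_le hIc (hc₀max ⟨ha'c.le, hcb'.le⟩)
  have hIa' : I a' = 0 := by rw [hIdef]; simp [hxa']
  have hIb' : I b' = 0 := by rw [hIdef]; simp [hxb']
  have hc₀Ioo : c₀ ∈ Set.Ioo a' b' := by
    rcases eq_or_lt_of_le hc₀mem.1 with hh | hh
    · exfalso
      rw [hh] at hIa'
      linarith
    rcases eq_or_lt_of_le hc₀mem.2 with hh2 | hh2
    · exfalso
      rw [hh2] at hIc₀
      linarith
    · exact ⟨hh, hh2⟩
  have hJc₀ : J c₀ = 0 := by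
    have hloc : IsLocalMax I c₀ := hc₀max.isLocalMax (Icc_mem_nhds hc₀Ioo.1 hc₀Ioo.2)
    have := hloc.deriv_eq_zero
    rw [(hI' c₀ hc₀Ioo).deriv] at this
    exact this
  -- I is strictly increasing on [t', b'] where t' = midpoint of (c₀, b')
  set t' : ℝ := (c₀ + b')/2 with ht'
  have ht'1 : c₀ < t' := by rw [ht']; linarith [hc₀Ioo.2]
  have ht'2 : t' < b' := by rw [ht']; linarith [hc₀Ioo.2]
  have ht'mem : t' ∈ Set.Ioo c₀ b' := ⟨ht'1, ht'2⟩
  have ht'Ioo : t' ∈ Set.Ioo a' b' := ⟨hc₀Ioo.1.trans ht'mem.1, ht'mem.2⟩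
  have hImono : StrictMonoOn I (Set.Icc t' b') := by
    refine strictMonoOn_of_deriv_pos (convex_Icc t' b') ?_ ?_
    · exact hIcont.mono (fun u hum => ⟨ht'Ioo.1.le.trans hum.1, hum.2⟩)
    · intro u hum
      rw [interior_Icc] at hum
      have huIoo : u ∈ Set.Ioo a' b' := ⟨ht'Ioo.1.trans hum.1, hum.2⟩
      rw [(hI' u huIoo).deriv]
      have : J c₀ < J u := hJmono hc₀Ioo huIoo (ht'mem.1.trans hum.1)
      linarith [hJc₀ ▸ this]
  have hfinal : I t' < I b' :=
    hImono ⟨le_refl t', ht'2.le⟩ ⟨ht'2.le, le_refl b'⟩ ht'2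
  have hIt' : 0 < I t' := hIpos t' (hnz t' ht'Ioo)
  rw [hIb'] at hfinal
  linarith
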